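/- arXiv:1205.4003 — 3 statements merged into one kernel-verified Lean document; each statement's English description precedes it below -/
import Mathlib

section
/- Fix q, t with 0 ≤ |q| < t, n ∈ ℕ, and a pair partition V = {(w_1,z_1),…,(w_n,z_n)} ∈ 𝒫₂(2n), with ε(1), …, ε(2n) ∈ {1,*} such that (ε(w_i), ε(z_i)) = (1,*) for every block. Let {μ(i,j)}_{1≤i<j} be independent, identically distributed, almost surely non-vanishing real random variables with E[μ(i,j)] = q/t and E[μ(i,j)²] = 1, and populate the coefficients μ_{ε,ε'}(i,j) by the standard prescription. Define the random variable X_N := N^{−n} Σ_{(i(1),…,i(2n)) ∈ [N]^{2n}, (i(1),…,i(2n)) ~ V} [ Π_{(w_j,w_k,z_j,z_k) ∈ Cross(V)} μ_{ε(z_j),ε(w_k)}(i(z_j),i(w_k)) ] · [ Π_{(w_ℓ,w_m,z_m,z_ℓ) ∈ Nest(V)} μ_{ε(z_ℓ),ε(z_m)}(i(z_ℓ),i(z_m)) · μ_{ε(z_ℓ),ε(w_m)}(i(z_ℓ),i(w_m)) ]. Then E[X_N] = q^{cross(V)} t^{nest(V)} · N^{−n} · C(N,n) · n!, and consequently lim_{N→∞}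 E[X_N] = q^{cross(V)} t^{nest(V)}. -/
open Filter MeasureTheory ProbabilityTheory
open scoped BigOperators ComplexOrder Classical

noncomputable section

/-- `sel a e` is `a^ε`: `a` if `e = false` (i.e. ε = 1) and `star a` if `e = true` (i.e. ε = ∗). -/
def sel {A : Type*} [Star A] (a : A) (e : Bool) : A := if e then star a else a

/-- The product `b_{i(1)}^{ε(1)} ⋯ b_{i(r)}^{ε(r)}`, indexed by a list of (index, exponent) pairs. -/
def listProd {A : Type*} [Monoid A] [Star A] (b : ℕ → A) (l : List (ℕ × Bool)) : A :=
  (l.map fun p => sel (b p.1) p.2).prod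

/-- The product `b_{i(1)}^{ε(1)} ⋯ b_{i(r)}^{ε(r)}`, indexed by `Fin r`. -/
def tupProd {A : Type*} [Monoid A] [Star A] (b : ℕ → A) {r : ℕ}
    (i : Fin r → ℕ) (eps : Fin r → Bool) : A :=
  (List.ofFn fun k => sel (b (i k)) (eps k)).prod

/-- The mixed moment `φ(X^{ε(1)} ⋯ X^{ε(r)})` of a single element `X`. -/
def smom {A : Type*} [Ring A] [StarRing A] [Algebra ℂ A] (φ : A →ₗ[ℂ] ℂ)
    (X : A) {r : ℕ} (eps : Fin r → Bool) : ℂ :=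
  φ ((List.ofFn fun k => sel X (eps k)).prod)

/-- The commutation coefficients are nonzero reals. -/
def NonzeroCoeff (c : Bool → Bool → ℕ → ℕ → ℝ) : Prop :=
  ∀ i j : ℕ, i ≠ j → ∀ e e' : Bool, c e e' i j ≠ 0

/-- Relations (A)–(B) on the commutation coefficients (`false` = 1, `true` = ∗):
`μ_{ε,ε'}(i,j) = 1/μ_{ε',ε}(j,i)`, `μ_{1,1}(i,j) = 1/μ_{∗,∗}(i,j)`,
`μ_{1,∗}(i,j) = 1/μ_{∗,1}(i,j)`. -/
def RelAB (c : Bool → Bool → ℕ → ℕ → ℝ) : Prop :=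
  (∀ i j : ℕ, i ≠ j → ∀ e e' : Bool, c e e' i j = (c e' e j i)⁻¹) ∧
  (∀ i j : ℕ, i ≠ j → c false false i j = (c true true i j)⁻¹) ∧
  (∀ i j : ℕ, i ≠ j → c false true i j = (c true false i j)⁻¹)

/-- Condition (★) for a sequence `b` in a complex ∗-probability space, with
commutation coefficients `c e e' i j = μ_{ε,ε'}(i,j)` (`false` = 1, `true` = ∗).
The factoring over naturally ordered products is stated in block form: a naturally
ordered product is a concatenation of nonempty blocks with constant indices, the
(distinct) block indices being strictly increasing. -/
structure StarCond {A : Type*} [Ring A] [StarRing A] [Algebra ℂ A]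
    (φ : A →ₗ[ℂ] ℂ) (b : ℕ → A) (c : Bool → Bool → ℕ → ℕ → ℝ) : Prop where
  zero_mean : ∀ i, φ (b i) = 0
  zero_mean_star : ∀ i, φ (star (b i)) = 0
  zero_bb : ∀ i, φ (b i * b i) = 0
  zero_ss : ∀ i, φ (star (b i) * star (b i)) = 0
  zero_sb : ∀ i, φ (star (b i) * b i) = 0
  covar : ∀ i j : ℕ, ∀ e e' : Bool,
    φ (sel (b i) e * sel (b i) e') = φ (sel (b j) e * sel (b j) e')
  bounded : ∀ r : ℕ, ∃ α : ℝ, 0 ≤ α ∧ ∀ l : List (ℕ × Bool), l.length = r →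
    ‖φ (listProd b l)‖ ≤ α
  factors : ∀ L : List (ℕ × List Bool),
    List.Chain' (· < ·) (L.map Prod.fst) → (∀ p ∈ L, p.2 ≠ []) →
    φ ((L.map fun p => (p.2.map (sel (b p.1))).prod).prod)
      = (L.map fun p => φ ((p.2.map (sel (b p.1))).prod)).prod
  commRel : ∀ i j : ℕ, i ≠ j → ∀ e e' : Bool,
    sel (b i) e * sel (b j) e' = ((c e' e j i : ℝ) : ℂ) • (sel (b j) e' * sel (b i) e)

/-- The normalized partial sum `S_N = (b 1 + ⋯ + b N)/√N`. -/
def pSum {A : Type*} [Ring A] [Algebra ℂ A] (b : ℕ → A) (N : ℕ) : A :=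
  (((Real.sqrt N)⁻¹ : ℝ) : ℂ) • ∑ i ∈ Finset.Icc 1 N, b i

/-- A pair partition `V = {(w 1, z 1), …, (w n, z n)}` of `{1, …, 2n}` (here of `Fin (2n)`),
with `w i < z i`, `w` strictly increasing, and the `w i, z i` exhausting `Fin (2n)`. -/
structure PairPartition (n : ℕ) where
  w : Fin n → Fin (2 * n)
  z : Fin n → Fin (2 * n)
  wz : ∀ i, w i < z i
  mono : StrictMono w
  bij : Function.Bijective fun p : Fin n × Bool => if p.2 then z p.1 else w p.1

instance (n : ℕ) : Fintype (PairPartition n) :=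
  Fintype.ofInjective (fun V : PairPartition n => (V.w, V.z)) (by
    rintro ⟨w₁, z₁, h₁, h₂, h₃⟩ ⟨w₂, z₂, g₁, g₂, g₃⟩ h
    simp only [Prod.mk.injEq] at h
    obtain ⟨rfl, rfl⟩ := h
    rfl)

/-- The crossings of a pair partition: pairs of blocks `(j, k)` with `w j < w k < z j < z k`. -/
def crossSet {n : ℕ} (V : PairPartition n) : Finset (Fin n × Fin n) :=
  Finset.univ.filter fun p => V.w p.1 < V.w p.2 ∧ V.w p.2 < V.z p.1 ∧ V.z p.1 < V.z p.2

/-- The nestings of a pair partition: pairs of blocks `(j, m)` with `w j < w m < z m < z j`. -/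
def nestSet {n : ℕ} (V : PairPartition n) : Finset (Fin n × Fin n) :=
  Finset.univ.filter fun p => V.w p.1 < V.w p.2 ∧ V.w p.2 < V.z p.2 ∧ V.z p.2 < V.z p.1

/-- `cross(V)`, the number of crossings. -/
def crossNum {n : ℕ} (V : PairPartition n) : ℕ := (crossSet V).card

/-- `nest(V)`, the number of nestings. -/
def nestNum {n : ℕ} (V : PairPartition n) : ℕ := (nestSet V).card

/-- Two positions lie in the same block of the pair partition `V`. -/
def sameBlock {n : ℕ} (V : PairPartition n) (k₁ k₂ : Fin (2 * n)) : Prop :=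
  k₁ = k₂ ∨ ∃ m, (k₁ = V.w m ∧ k₂ = V.z m) ∨ (k₁ = V.z m ∧ k₂ = V.w m)

/-- `(i(1), …, i(2n)) ∼ V`: entries agree exactly on the blocks of `V`. -/
def tupleEquiv {n : ℕ} {α : Type*} (V : PairPartition n) (i : Fin (2 * n) → α) : Prop :=
  ∀ k₁ k₂, i k₁ = i k₂ ↔ sameBlock V k₁ k₂

/-- The tuples in `[N]^{2n} = {1, …, N}^{2n}` that are equivalent to `V`. -/
def tuples (n N : ℕ) (V : PairPartition n) : Finset (Fin (2 * n) → ℕ) :=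
  (Fintype.piFinset fun _ : Fin (2 * n) => Finset.Icc 1 N).filter fun i => tupleEquiv V i

/-- `β^{ε(1),…,ε(2n)}_{i(1),…,i(2n)}`: the product over crossings of `V` of
`μ_{ε(z_j),ε(w_k)}(i(z_j),i(w_k))` times the product over nestings of `V` of
`μ_{ε(z_j),ε(z_m)}(i(z_j),i(z_m)) · μ_{ε(z_j),ε(w_m)}(i(z_j),i(w_m))`. -/
def betaProd (n : ℕ) (V : PairPartition n) (eps : Fin (2 * n) → Bool)
    (c : Bool → Bool → ℕ → ℕ → ℝ) (i : Fin (2 * n) → ℕ) : ℝ :=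
  (∏ p ∈ crossSet V, c (eps (V.z p.1)) (eps (V.w p.2)) (i (V.z p.1)) (i (V.w p.2))) *
  ∏ p ∈ nestSet V,
    c (eps (V.z p.1)) (eps (V.z p.2)) (i (V.z p.1)) (i (V.z p.2)) *
      c (eps (V.z p.1)) (eps (V.w p.2)) (i (V.z p.1)) (i (V.w p.2))

/-- `X_N = N^{-n} Σ_{(i(1),…,i(2n)) ∼ V} β^{ε(1),…,ε(2n)}_{i(1),…,i(2n)}`, whose limit
(when it exists) is `λ_{V,ε(1),…,ε(2n)}`. -/
def lambdaSum (n : ℕ) (V : PairPartition n) (eps : Fin (2 * n) → Bool)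
    (c : Bool → Bool → ℕ → ℕ → ℝ) (N : ℕ) : ℝ :=
  ((N : ℝ)⁻¹) ^ n * ∑ i ∈ tuples n N V, betaProd n V eps c i

/-- One-pair standard prescription: for `x = μ(i,j)` (with `i < j`),
`μ_{∗,∗} = x`, `μ_{∗,1} = t·x`, `μ_{1,1} = x⁻¹`, `μ_{1,∗} = (t·x)⁻¹`. -/
def prescOne (t x : ℝ) (e e' : Bool) : ℝ :=
  if e then (if e' then x else t * x) else (if e' then (t * x)⁻¹ else x⁻¹)

/-- The standard prescription of commutation coefficients from `{μ(i,j)}_{i<j}`,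
extended to `i > j` by `μ_{ε',ε}(j,i) = 1/μ_{ε,ε'}(i,j)`. -/
def presc (t : ℝ) (m : ℕ → ℕ → ℝ) (e e' : Bool) (i j : ℕ) : ℝ :=
  if i < j then prescOne t (m i j) e e' else (prescOne t (m j i) e' e)⁻¹

/-- The index set `{(i,j) : 1 ≤ i < j}` of the random commutation coefficients. -/
def PairIdx : Type := {p : ℕ × ℕ // 1 ≤ p.1 ∧ p.1 < p.2}

/-- `σ_x = [[1,0],[0,√t·x]]`. -/
def sigmaM (t x : ℝ) : Matrix (Fin 2) (Fin 2) ℝ := !![1, 0; 0, Real.sqrt t * x]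

/-- `γ = [[0,1],[0,0]]`. -/
def gammaM : Matrix (Fin 2) (Fin 2) ℝ := !![0, 1; 0, 0]

/-- The two-parameter Jordan–Wigner matrix
`b_{n,i} = σ_{μ(1,i)} ⊗ ⋯ ⊗ σ_{μ(i-1,i)} ⊗ γ ⊗ σ₁^{⊗(n-i)} ∈ M₂(ℝ)^{⊗n}`,
realized on the index set `Fin n → Fin 2` (tensor/Kronecker products of matrices
have entries the products of the entries of the factors). -/
def jw (t : ℝ) (m : ℕ → ℕ → ℝ) (n i : ℕ) : Matrix (Fin n → Fin 2) (Fin n → Fin 2) ℝ :=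
  Matrix.of fun x y => ∏ k : Fin n,
    (if (k : ℕ) + 1 < i then sigmaM t (m ((k : ℕ) + 1) i)
     else if (k : ℕ) + 1 = i then gammaM
     else sigmaM t 1) (x k) (y k)

/-- `φ_n(a) = ⟨a e₀, e₀⟩ = a₀₀`. -/
def phiM (n : ℕ) (a : Matrix (Fin n → Fin 2) (Fin n → Fin 2) ℝ) : ℝ :=
  a (fun _ => 0) (fun _ => 0)

/-- The normalized partial sum `S_N = (b_{N,1} + ⋯ + b_{N,N})/√N` of Jordan–Wigner matrices. -/
def jwS (t : ℝ) (m : ℕ → ℕ → ℝ) (N : ℕ) : Matrix (Fin N → Fin 2) (Fin N → Fin 2) ℝ :=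
  (Real.sqrt N)⁻¹ • ∑ i ∈ Finset.Icc 1 N, jw t m N i

/-! ### Auxiliary lemmas -/

section Aux

lemma integral_prod_of_iIndep {Ω : Type*} [MeasureSpace Ω]
    [IsProbabilityMeasure (ℙ : Measure Ω)] {ι : Type*} (X : ι → Ω → ℝ)
    (h : iIndepFun (m := fun _ => (inferInstance : MeasurableSpace ℝ)) X ℙ)
    (hm : ∀ i, Measurable (X i)) (hint : ∀ i, Integrable (X i) ℙ) (s : Finset ι) :
    Integrable (fun ω => ∏ i ∈ s, X i ω) ℙ ∧
      ∫ ω, ∏ i ∈ s, X i ω ∂ℙ = ∏ i ∈ s, ∫ ω, X i ω ∂ℙ := by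
  classical
  induction s using Finset.induction_on with
  | empty => simp
  | insert a s hns ih =>
    have hindep : IndepFun (fun ω => ∏ i ∈ s, X i ω) (X a) ℙ := by
      have := h.indepFun_finset_prod_of_notMem hm hns
      simpa [Finset.prod_fn] using this
    have hint' : Integrable (fun ω => X a ω * ∏ i ∈ s, X i ω) ℙ := by
      have := hindep.symm.integrable_mul (hint a) ih.1
      exact this
    constructor
    · simpa [Finset.prod_insert hns] using hint'
    · rw [Finset.prod_insert hns]
      have := hindep.symm.integral_fun_mul_eq_mul_integral (hint a).1 ih.1.1
      calc ∫ ω, ∏ i ∈ insert a s, X i ω ∂ℙ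
          = ∫ ω, X a ω * ∏ i ∈ s, X i ω ∂ℙ := by
            simp [Finset.prod_insert hns]
        _ = (∫ ω, X a ω ∂ℙ) * ∫ ω, ∏ i ∈ s, X i ω ∂ℙ := this
        _ = (∫ ω, X a ω ∂ℙ) * ∏ i ∈ s, ∫ ω, X i ω ∂ℙ := by rw [ih.2]

lemma minmax_eq {a b a' b' : ℕ} (hou : min a b = min a' b')
    (hov : max a b = max a' b') : (a = a' ∧ b = b') ∨ (a = b' ∧ b = a') := by
  rcases le_total a b with h | h <;> rcases le_total a' b' with h' | h' <;>
    simp [min_eq_left, min_eq_right, max_eq_right, max_eq_left, h, h'] at hou hov <;> omega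

lemma desc_tendsto (n : ℕ) :
    Tendsto (fun N : ℕ => ((N : ℝ)⁻¹) ^ n * (N.descFactorial n : ℝ)) atTop (nhds 1) := by
  have key : ∀ᶠ N : ℕ in atTop, ((N : ℝ)⁻¹) ^ n * (N.descFactorial n : ℝ)
      = ∏ k ∈ Finset.range n, (1 - (k : ℝ) / N) := by
    filter_upwards [eventually_ge_atTop (max n 1)] with N hN
    have hNn : n ≤ N := le_trans (le_max_left _ _) hN
    have hN0 : (N : ℝ) ≠ 0 := Nat.cast_ne_zero.2 (by omega)
    rw [Nat.descFactorial_eq_prod_range, Nat.cast_prod]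
    calc ((N : ℝ)⁻¹) ^ n * ∏ k ∈ Finset.range n, ((N - k : ℕ) : ℝ)
        = ((N : ℝ)⁻¹) ^ n * ∏ k ∈ Finset.range n, ((N : ℝ) - k) := by
          rw [Finset.prod_congr rfl (g := fun k : ℕ => (N : ℝ) - k)
            (fun k hk => Nat.cast_sub (le_trans (Finset.mem_range.1 hk).le hNn))]
      _ = ∏ k ∈ Finset.range n, ((N : ℝ) - k) / N := by
          rw [Finset.prod_div_distrib, Finset.prod_const, Finset.card_range, inv_pow]
          ring
      _ = ∏ k ∈ Finset.range n, (1 - (k : ℝ) / N) := by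
          refine Finset.prod_congr rfl fun k _ => ?_
          rw [sub_div, div_self hN0]
  refine Tendsto.congr' (key.mono fun N h => h.symm) ?_
  have h1 : (1 : ℝ) = ∏ k ∈ Finset.range n, (1 : ℝ) := by simp
  rw [h1]
  refine tendsto_finset_prod _ fun k _ => ?_
  have : Tendsto (fun N : ℕ => (k : ℝ) / N) atTop (nhds 0) :=
    tendsto_const_div_atTop_nhds_zero_nat (k : ℝ)
  simpa using tendsto_const_nhds.sub this

instance : Countable PairIdx := by unfold PairIdx; infer_instance

instance : Inhabited PairIdx := ⟨⟨(1, 2), by norm_num⟩⟩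

/-- pack an unordered pair into a `PairIdx`. -/
def pidx (a b : ℕ) : PairIdx :=
  if h : 1 ≤ min a b ∧ min a b < max a b then ⟨(min a b, max a b), h⟩ else default

lemma pidx_val {a b : ℕ} (ha : 1 ≤ a) (hb : 1 ≤ b) (hab : a ≠ b) :
    (pidx a b).1 = (min a b, max a b) := by
  have h : 1 ≤ min a b ∧ min a b < max a b := ⟨le_min ha hb, min_lt_max.2 hab⟩
  simp [pidx, h]

lemma pidx_eq {a b a' b' : ℕ} (ha : 1 ≤ a) (hb : 1 ≤ b) (hab : a ≠ b)
    (ha' : 1 ≤ a') (hb' : 1 ≤ b') (hab' : a' ≠ b') (h : pidx a b = pidx a' b') :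
    (a = a' ∧ b = b') ∨ (a = b' ∧ b = a') := by
  have := congrArg Subtype.val h
  rw [pidx_val ha hb hab, pidx_val ha' hb' hab'] at this
  exact minmax_eq (congrArg Prod.fst this) (congrArg Prod.snd this)

section PP
variable {n : ℕ} (V : PairPartition n)

/-- The pairing of positions with (block, end) labels. -/
def pe : Fin n × Bool ≃ Fin (2 * n) := Equiv.ofBijective _ V.bij

lemma pe_w (m : Fin n) : pe V (m, false) = V.w m := rfl
lemma pe_z (m : Fin n) : pe V (m, true) = V.z m := rfl

lemma pe_symm_w (m : Fin n) : (pe V).symm (V.w m) = (m, false) := by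
  rw [← pe_w V m, Equiv.symm_apply_apply]
lemma pe_symm_z (m : Fin n) : (pe V).symm (V.z m) = (m, true) := by
  rw [← pe_z V m, Equiv.symm_apply_apply]

lemma sameBlock_iff (k₁ k₂ : Fin (2 * n)) :
    sameBlock V k₁ k₂ ↔ ((pe V).symm k₁).1 = ((pe V).symm k₂).1 := by
  constructor
  · rintro (rfl | ⟨m, ⟨rfl, rfl⟩ | ⟨rfl, rfl⟩⟩)
    · rfl
    · rw [pe_symm_w, pe_symm_z]
    · rw [pe_symm_z, pe_symm_w]
  · intro h
    rcases hp₁ : (pe V).symm k₁ with ⟨m₁, b₁⟩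
    rcases hp₂ : (pe V).symm k₂ with ⟨m₂, b₂⟩
    rw [hp₁, hp₂] at h
    simp only at h
    subst h
    have e₁ : k₁ = pe V (m₁, b₁) := by rw [← hp₁, Equiv.apply_symm_apply]
    have e₂ : k₂ = pe V (m₁, b₂) := by rw [← hp₂, Equiv.apply_symm_apply]
    cases b₁ <;> cases b₂ <;>
        simp only [pe_w, pe_z] at e₁ e₂ <;> subst e₁ <;> subst e₂
    · exact Or.inl rfl
    · exact Or.inr ⟨m₁, Or.inl ⟨rfl, rfl⟩⟩
    · exact Or.inr ⟨m₁, Or.inr ⟨rfl, rfl⟩⟩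
    · exact Or.inl rfl

end PP

end Aux

lemma mem_cross {n : ℕ} {V : PairPartition n} {p : Fin n × Fin n} :
    p ∈ crossSet V ↔ V.w p.1 < V.w p.2 ∧ V.w p.2 < V.z p.1 ∧ V.z p.1 < V.z p.2 := by
  simp [crossSet]

lemma mem_nest {n : ℕ} {V : PairPartition n} {p : Fin n × Fin n} :
    p ∈ nestSet V ↔ V.w p.1 < V.w p.2 ∧ V.w p.2 < V.z p.2 ∧ V.z p.2 < V.z p.1 := by
  simp [nestSet]

lemma cross_ne {n : ℕ} {V : PairPartition n} {p : Fin n × Fin n}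
    (hp : p ∈ crossSet V) : p.1 ≠ p.2 := by
  rintro h
  exact absurd (mem_cross.1 hp).1 (by rw [h]; exact lt_irrefl _)

lemma nest_ne {n : ℕ} {V : PairPartition n} {p : Fin n × Fin n}
    (hp : p ∈ nestSet V) : p.1 ≠ p.2 := by
  rintro h
  exact absurd (mem_nest.1 hp).1 (by rw [h]; exact lt_irrefl _)

lemma mem_tuples {n N : ℕ} {V : PairPartition n} {i : Fin (2 * n) → ℕ} :
    i ∈ tuples n N V ↔ (∀ k, 1 ≤ i k ∧ i k ≤ N) ∧ tupleEquiv V i := by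
  simp [tuples, Fintype.mem_piFinset]

lemma ti_iff {n : ℕ} {V : PairPartition n} {α : Type*} {i : Fin (2 * n) → α}
    (hte : tupleEquiv V i) (k₁ k₂ : Fin (2 * n)) :
    i k₁ = i k₂ ↔ ((pe V).symm k₁).1 = ((pe V).symm k₂).1 :=
  (hte k₁ k₂).trans (sameBlock_iff V k₁ k₂)

lemma i_zw {n : ℕ} {V : PairPartition n} {α : Type*} {i : Fin (2 * n) → α}
    (hte : tupleEquiv V i) (m : Fin n) : i (V.z m) = i (V.w m) :=
  (ti_iff hte _ _).2 (by rw [pe_symm_z, pe_symm_w])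

lemma i_w_inj {n : ℕ} {V : PairPartition n} {α : Type*} {i : Fin (2 * n) → α}
    (hte : tupleEquiv V i) {j k : Fin n} (h : i (V.w j) = i (V.w k)) : j = k := by
  have := (ti_iff hte _ _).1 h
  rwa [pe_symm_w, pe_symm_w] at this

lemma card_tuples (n N : ℕ) (V : PairPartition n) :
    (tuples n N V).card = N.descFactorial n := by
  classical
  have key : (tuples n N V).card = Fintype.card (Fin n ↪ (Finset.Icc 1 N)) := by
    rw [← Finset.card_univ]
    refine Finset.card_bij'
      (i := fun i hi => ⟨fun m => (⟨i (V.w m), by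
          have := (mem_tuples.1 hi).1 (V.w m)
          exact Finset.mem_Icc.2 ⟨this.1, this.2⟩⟩ : (Finset.Icc 1 N)),
        fun a b hab => i_w_inj (mem_tuples.1 hi).2 (by
          simpa using congrArg Subtype.val hab)⟩)
      (j := fun e _ => fun k => (e ((pe V).symm k).1 : ℕ))
      (fun i hi => Finset.mem_univ _) (fun e he => ?_) (fun i hi => ?_) (fun e he => ?_)
    · refine mem_tuples.2 ⟨fun k => ?_, fun k₁ k₂ => ?_⟩
      · have := (e ((pe V).symm k).1).2
        exact Finset.mem_Icc.1 this
      · rw [sameBlock_iff]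
        constructor
        · intro h
          exact e.injective (Subtype.ext h)
        · intro h
          exact congrArg (fun m => ((e m : ℕ))) h
    · funext k
      show i (V.w ((pe V).symm k).1) = i k
      have : V.w ((pe V).symm k).1 = k ∨ V.z ((pe V).symm k).1 = k := by
        rcases hb : ((pe V).symm k).2 with _ | _
        · left
          have : (pe V).symm k = (((pe V).symm k).1, false) := by
            rw [← hb]
          rw [← pe_w V ((pe V).symm k).1, ← this, Equiv.apply_symm_apply]
        · right
          have : (pe V).symm k = (((pe V).symm k).1, true) := by
            rw [← hb]
          rw [← pe_z V ((pe V).symm k).1, ← this, Equiv.apply_symm_apply]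
      rcases this with h | h
      · rw [h]
      · have h2 := (i_zw (mem_tuples.1 hi).2 ((pe V).symm k).1).symm
        rw [h] at h2
        exact h2
    · ext m
      simp [pe_symm_w]
  rw [key, Fintype.card_embedding_eq, Fintype.card_fin, Fintype.card_coe, Nat.card_Icc,
    Nat.add_sub_cancel]

lemma pidx_fst {a b : ℕ} (ha : 1 ≤ a) (hb : 1 ≤ b) (hab : a ≠ b) :
    (pidx a b).1.1 = min a b := by rw [pidx_val ha hb hab]

lemma pidx_snd {a b : ℕ} (ha : 1 ≤ a) (hb : 1 ≤ b) (hab : a ≠ b) :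
    (pidx a b).1.2 = max a b := by rw [pidx_val ha hb hab]

lemma presc_cross (t : ℝ) (m : ℕ → ℕ → ℝ) {a b : ℕ} (hab : a ≠ b) :
    presc t m true false a b = t * m (min a b) (max a b) := by
  rcases lt_or_gt_of_ne hab with h | h
  · rw [min_eq_left h.le, max_eq_right h.le]
    simp [presc, prescOne, h]
  · rw [min_eq_right h.le, max_eq_left h.le]
    simp [presc, prescOne, h, not_lt_of_gt h]

lemma presc_nest_lt (t : ℝ) (m : ℕ → ℕ → ℝ) {a b : ℕ} (h : a < b) :
    presc t m true true a b * presc t m true false a b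
      = t * m (min a b) (max a b) ^ 2 := by
  rw [min_eq_left h.le, max_eq_right h.le]
  simp [presc, prescOne, h]
  ring

lemma presc_nest_gt (t : ℝ) (m : ℕ → ℕ → ℝ) {a b : ℕ} (h : b < a)
    (h0 : m b a ≠ 0) :
    presc t m true true a b * presc t m true false a b = t := by
  simp [presc, prescOne, not_lt_of_gt h]
  field_simp

lemma tuple_integral
    {Ω : Type*} [MeasureSpace Ω] [IsProbabilityMeasure (ℙ : Measure Ω)]
    (q t : ℝ) (ht : 0 < t)
    (μr : ℕ → ℕ → Ω → ℝ)
    (hmeas : ∀ p : PairIdx, Measurable fun ω => μr p.1.1 p.1.2 ω)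
    (hindep : iIndepFun (m := fun _ : PairIdx => (inferInstance : MeasurableSpace ℝ))
      (fun p : PairIdx => fun ω => μr p.1.1 p.1.2 ω) ℙ)
    (hnz : ∀ p : PairIdx, ∀ᵐ ω ∂ℙ, μr p.1.1 p.1.2 ω ≠ 0)
    (hL2 : ∀ p : PairIdx, MemLp (fun ω => μr p.1.1 p.1.2 ω) 2 ℙ)
    (hmean : ∀ p : PairIdx, ∫ ω, μr p.1.1 p.1.2 ω ∂ℙ = q / t)
    (hsq : ∀ p : PairIdx, ∫ ω, (μr p.1.1 p.1.2 ω) ^ 2 ∂ℙ = 1)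
    (n : ℕ) (V : PairPartition n) (eps : Fin (2 * n) → Bool)
    (heps : ∀ m : Fin n, eps (V.w m) = false ∧ eps (V.z m) = true)
    (N : ℕ) (i : Fin (2 * n) → ℕ) (hi : i ∈ tuples n N V) :
    Integrable (fun ω => betaProd n V eps (presc t fun a b => μr a b ω) i) ℙ ∧
    ∫ ω, betaProd n V eps (presc t fun a b => μr a b ω) i ∂ℙ
      = q ^ crossNum V * t ^ nestNum V := by
  classical
  obtain ⟨hIcc, hte⟩ := mem_tuples.1 hi
  set vv : Fin n → ℕ := fun m => i (V.w m) with hvv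
  have hvv1 : ∀ m, 1 ≤ vv m := fun m => (hIcc _).1
  have hvvinj : ∀ {j k}, vv j = vv k → j = k := fun {j k} h => i_w_inj hte h
  set π : Fin n × Fin n → PairIdx := fun p => pidx (vv p.1) (vv p.2) with hπ
  have hvne : ∀ {p : Fin n × Fin n}, p.1 ≠ p.2 → vv p.1 ≠ vv p.2 :=
    fun {p} hp h => hp (hvvinj h)
  have hπeq : ∀ p q : Fin n × Fin n, p.1 ≠ p.2 → q.1 ≠ q.2 → π p = π q →
      p = q ∨ p = q.swap := by
    intro p q hp hq h
    rcases pidx_eq (hvv1 _) (hvv1 _) (hvne hp) (hvv1 _) (hvv1 _) (hvne hq) h with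
      ⟨h1, h2⟩ | ⟨h1, h2⟩
    · exact Or.inl (Prod.ext (hvvinj h1) (hvvinj h2))
    · exact Or.inr (Prod.ext (hvvinj h1) (hvvinj h2))
  set n1 : Finset (Fin n × Fin n) := (nestSet V).filter (fun p => vv p.1 < vv p.2) with hn1
  set n2 : Finset (Fin n × Fin n) := (nestSet V).filter (fun p => ¬ vv p.1 < vv p.2) with hn2
  have hn1s : ∀ {p}, p ∈ n1 → p ∈ nestSet V := fun hp => (Finset.mem_filter.1 hp).1
  have hn2s : ∀ {p}, p ∈ n2 → p ∈ nestSet V := fun hp => (Finset.mem_filter.1 hp).1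
  -- swap exclusions
  have hswap_cc : ∀ {p q : Fin n × Fin n}, p ∈ crossSet V → q ∈ crossSet V → p ≠ q.swap := by
    intro p q hp hq h
    subst h
    exact lt_asymm (mem_cross.1 hp).1 (mem_cross.1 hq).1
  have hswap_nn : ∀ {p q : Fin n × Fin n}, p ∈ nestSet V → q ∈ nestSet V → p ≠ q.swap := by
    intro p q hp hq h
    subst h
    exact lt_asymm (mem_nest.1 hp).1 (mem_nest.1 hq).1
  have hcn : ∀ {p q : Fin n × Fin n}, p ∈ crossSet V → q ∈ nestSet V → π p ≠ π q := by
    intro p q hp hq h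
    rcases hπeq p q (cross_ne hp) (nest_ne hq) h with h' | h'
    · subst h'
      exact lt_asymm (mem_cross.1 hp).2.2 (mem_nest.1 hq).2.2
    · subst h'
      exact lt_asymm (mem_cross.1 hp).1 (mem_nest.1 hq).1
  -- injectivity on the three source sets
  have hinjc : ∀ p ∈ crossSet V, ∀ q ∈ crossSet V, π p = π q → p = q := by
    intro p hp q hq h
    rcases hπeq p q (cross_ne hp) (cross_ne hq) h with h' | h'
    · exact h'
    · exact absurd h' (hswap_cc hp hq)
  have hinjn : ∀ p ∈ nestSet V, ∀ q ∈ nestSet V, π p = π q → p = q := by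
    intro p hp q hq h
    rcases hπeq p q (nest_ne hp) (nest_ne hq) h with h' | h'
    · exact h'
    · exact absurd h' (hswap_nn hp hq)
  have hinj1 : ∀ p ∈ n1, ∀ q ∈ n1, π p = π q → p = q :=
    fun p hp q hq h => hinjn p (hn1s hp) q (hn1s hq) h
  have hinj2 : ∀ p ∈ n2, ∀ q ∈ n2, π p = π q → p = q :=
    fun p hp q hq h => hinjn p (hn2s hp) q (hn2s hq) h
  set Sc : Finset PairIdx := (crossSet V).image π with hSc
  set S1 : Finset PairIdx := n1.image π with hS1
  set S2 : Finset PairIdx := n2.image π with hS2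
  have hd01 : Disjoint Sc S1 := by
    rw [Finset.disjoint_left]
    rintro a ha ha'
    obtain ⟨p, hp, rfl⟩ := Finset.mem_image.1 ha
    obtain ⟨q, hq, hqe⟩ := Finset.mem_image.1 ha'
    exact hcn hp (hn1s hq) hqe.symm
  have hd02 : Disjoint Sc S2 := by
    rw [Finset.disjoint_left]
    rintro a ha ha'
    obtain ⟨p, hp, rfl⟩ := Finset.mem_image.1 ha
    obtain ⟨q, hq, hqe⟩ := Finset.mem_image.1 ha'
    exact hcn hp (hn2s hq) hqe.symm
  have hd12 : Disjoint S1 S2 := by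
    rw [Finset.disjoint_left]
    rintro a ha ha'
    obtain ⟨p, hp, rfl⟩ := Finset.mem_image.1 ha
    obtain ⟨q, hq, hqe⟩ := Finset.mem_image.1 ha'
    have := hinjn q (hn2s hq) p (hn1s hp) hqe
    subst this
    exact (Finset.mem_filter.1 hq).2 (Finset.mem_filter.1 hp).2
  set Y : PairIdx → Ω → ℝ := fun p ω =>
    if p ∈ Sc then t * μr p.1.1 p.1.2 ω
    else if p ∈ S1 then t * (μr p.1.1 p.1.2 ω) ^ 2
    else if p ∈ S2 then t else 1 with hY
  have hYmeas : ∀ p, Measurable (Y p) := by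
    intro p
    simp only [hY]
    split_ifs
    · exact (hmeas p).const_mul t
    · exact ((hmeas p).pow_const 2).const_mul t
    · exact measurable_const
    · exact measurable_const
  have hYint : ∀ p, Integrable (Y p) ℙ := by
    intro p
    simp only [hY]
    split_ifs
    · exact ((hL2 p).integrable one_le_two).const_mul t
    · exact ((hL2 p).integrable_sq).const_mul t
    · exact integrable_const t
    · exact integrable_const 1
  have hYindep : iIndepFun (m := fun _ : PairIdx => (inferInstance : MeasurableSpace ℝ)) Y ℙ := by
    have := hindep.comp (g := fun (p : PairIdx) (x : ℝ) =>
      if p ∈ Sc then t * x else if p ∈ S1 then t * x ^ 2 else if p ∈ S2 then t else 1)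
      (fun p => by
        show Measurable (fun x : ℝ => if p ∈ Sc then t * x else
          if p ∈ S1 then t * x ^ 2 else if p ∈ S2 then t else 1)
        split_ifs <;> fun_prop)
    exact this
  -- a.e. identification of betaProd with the product of Y's
  have hall : ∀ᵐ ω ∂ℙ, ∀ p : PairIdx, μr p.1.1 p.1.2 ω ≠ 0 := ae_all_iff.2 hnz
  have hae : ∀ᵐ ω ∂ℙ, betaProd n V eps (presc t fun a b => μr a b ω) i
      = ∏ p ∈ Sc ∪ S1 ∪ S2, Y p ω := by
    filter_upwards [hall] with ω hω
    have hc : ∀ p ∈ crossSet V,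
        presc t (fun a b => μr a b ω) (eps (V.z p.1)) (eps (V.w p.2))
          (i (V.z p.1)) (i (V.w p.2)) = t * μr (π p).1.1 (π p).1.2 ω := by
      intro p hp
      have hab : vv p.1 ≠ vv p.2 := hvne (cross_ne hp)
      rw [(heps p.1).2, (heps p.2).1, i_zw hte p.1]
      show presc t (fun a b => μr a b ω) true false (vv p.1) (vv p.2) = _
      rw [presc_cross t _ hab, hπ]
      simp only
      rw [pidx_fst (hvv1 _) (hvv1 _) hab, pidx_snd (hvv1 _) (hvv1 _) hab]
    have hn : ∀ p ∈ nestSet V,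
        presc t (fun a b => μr a b ω) (eps (V.z p.1)) (eps (V.z p.2))
            (i (V.z p.1)) (i (V.z p.2)) *
          presc t (fun a b => μr a b ω) (eps (V.z p.1)) (eps (V.w p.2))
            (i (V.z p.1)) (i (V.w p.2))
          = if vv p.1 < vv p.2 then t * (μr (π p).1.1 (π p).1.2 ω) ^ 2 else t := by
      intro p hp
      have hab : vv p.1 ≠ vv p.2 := hvne (nest_ne hp)
      rw [(heps p.1).2, (heps p.2).2, (heps p.2).1, i_zw hte p.1, i_zw hte p.2]
      show presc t (fun a b => μr a b ω) true true (vv p.1) (vv p.2) *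
          presc t (fun a b => μr a b ω) true false (vv p.1) (vv p.2) = _
      rcases lt_or_gt_of_ne hab with h | h
      · rw [if_pos h, presc_nest_lt t _ h, hπ]
        simp only
        rw [pidx_fst (hvv1 _) (hvv1 _) hab, pidx_snd (hvv1 _) (hvv1 _) hab]
      · rw [if_neg (not_lt_of_gt h), presc_nest_gt t _ h]
        have := hω (π p)
        rw [hπ] at this
        simp only at this
        rwa [pidx_fst (hvv1 _) (hvv1 _) hab, pidx_snd (hvv1 _) (hvv1 _) hab,
          min_eq_right h.le, max_eq_left h.le] at this
    calc betaProd n V eps (presc t fun a b => μr a b ω) i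
        = (∏ p ∈ crossSet V, (t * μr (π p).1.1 (π p).1.2 ω)) *
            ∏ p ∈ nestSet V,
              (if vv p.1 < vv p.2 then t * (μr (π p).1.1 (π p).1.2 ω) ^ 2 else t) := by
          unfold betaProd
          rw [Finset.prod_congr rfl hc, Finset.prod_congr rfl hn]
      _ = (∏ p ∈ Sc, Y p ω) * ((∏ p ∈ S1, Y p ω) * ∏ p ∈ S2, Y p ω) := by
          congr 1
          · rw [hSc, Finset.prod_image hinjc]
            refine Finset.prod_congr rfl fun p hp => ?_
            have : π p ∈ Sc := Finset.mem_image_of_mem π hp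
            simp only [hY, if_pos this]
          · rw [← Finset.prod_filter_mul_prod_filter_not (nestSet V)
              (fun p => vv p.1 < vv p.2), ← hn1, ← hn2]
            congr 1
            · rw [hS1, Finset.prod_image hinj1]
              refine Finset.prod_congr rfl fun p hp => ?_
              have h1 : π p ∈ S1 := Finset.mem_image_of_mem π hp
              have h0 : π p ∉ Sc := Finset.disjoint_right.1 hd01 h1
              simp only [hY, if_neg h0, if_pos h1, if_pos (Finset.mem_filter.1 hp).2]
            · rw [hS2, Finset.prod_image hinj2]
              refine Finset.prod_congr rfl fun p hp => ?_
              have h2 : π p ∈ S2 := Finset.mem_image_of_mem π hp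
              have h0 : π p ∉ Sc := Finset.disjoint_right.1 hd02 h2
              have h1 : π p ∉ S1 := Finset.disjoint_right.1 hd12 h2
              simp only [hY, if_neg h0, if_neg h1, if_pos h2,
                if_neg (Finset.mem_filter.1 hp).2]
      _ = ∏ p ∈ Sc ∪ S1 ∪ S2, Y p ω := by
          rw [Finset.union_assoc, Finset.prod_union, Finset.prod_union hd12]
          exact Finset.disjoint_union_right.2 ⟨hd01, hd02⟩
  obtain ⟨hPint, hPeq⟩ := integral_prod_of_iIndep Y hYindep hYmeas hYint (Sc ∪ S1 ∪ S2)
  have hcardc : Sc.card = crossNum V := by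
    rw [hSc, Finset.card_image_of_injOn hinjc]; rfl
  have hcardn : S1.card + S2.card = nestNum V := by
    rw [hS1, hS2, Finset.card_image_of_injOn hinj1, Finset.card_image_of_injOn hinj2,
      hn1, hn2, Finset.card_filter_add_card_filter_not]
    rfl
  constructor
  · exact hPint.congr (hae.mono fun ω h => h.symm)
  · rw [integral_congr_ae hae, hPeq, Finset.union_assoc, Finset.prod_union
      (Finset.disjoint_union_right.2 ⟨hd01, hd02⟩), Finset.prod_union hd12]
    have e0 : ∏ p ∈ Sc, ∫ ω, Y p ω ∂ℙ = q ^ crossNum V := by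
      rw [Finset.prod_congr rfl (g := fun _ => q) fun p hp => ?_, Finset.prod_const, hcardc]
      simp only [hY, if_pos hp]
      rw [integral_const_mul t, hmean p, mul_comm, div_mul_cancel₀ q ht.ne']
    have e1 : ∏ p ∈ S1, ∫ ω, Y p ω ∂ℙ = t ^ S1.card := by
      rw [Finset.prod_congr rfl (g := fun _ => t) fun p hp => ?_, Finset.prod_const]
      have h0 : p ∉ Sc := Finset.disjoint_right.1 hd01 hp
      simp only [hY, if_neg h0, if_pos hp]
      rw [integral_const_mul t, hsq p, mul_one]
    have e2 : ∏ p ∈ S2, ∫ ω, Y p ω ∂ℙ = t ^ S2.card := by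
      rw [Finset.prod_congr rfl (g := fun _ => t) fun p hp => ?_, Finset.prod_const]
      have h0 : p ∉ Sc := Finset.disjoint_right.1 hd02 hp
      have h1 : p ∉ S1 := Finset.disjoint_right.1 hd12 hp
      simp only [hY, if_neg h0, if_neg h1, if_pos hp]
      simp
    rw [e0, e1, e2, ← pow_add, hcardn]

/-- with every block of `V` carrying the exponent pattern (1, ∗),
`E[X_N] = q^cross(V) t^nest(V) · N^{-n} · C(N,n) · n!`, and consequently
`E[X_N] → q^cross(V) t^nest(V)` as `N → ∞`. -/
theorem expectation_of_XN
    (q t : ℝ) (hqt : |q| < t)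
{Ω : Type*} [MeasureSpace Ω] [IsProbabilityMeasure (ℙ : Measure Ω)]
    (μr : ℕ → ℕ → Ω → ℝ)
    (hmeas : ∀ p : PairIdx, Measurable fun ω => μr p.1.1 p.1.2 ω)
    (hindep : iIndepFun (m := fun _ : PairIdx => (inferInstance : MeasurableSpace ℝ))
      (fun p : PairIdx => fun ω => μr p.1.1 p.1.2 ω) ℙ)
    (hident : ∀ p p' : PairIdx,
      IdentDistrib (fun ω => μr p.1.1 p.1.2 ω) (fun ω => μr p'.1.1 p'.1.2 ω) ℙ ℙ)
    (hnz : ∀ p : PairIdx, ∀ᵐ ω ∂ℙ, μr p.1.1 p.1.2 ω ≠ 0)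
    (hL2 : ∀ p : PairIdx, MemLp (fun ω => μr p.1.1 p.1.2 ω) 2 ℙ)
    (hmean : ∀ p : PairIdx, ∫ ω, μr p.1.1 p.1.2 ω ∂ℙ = q / t)
    (hsq : ∀ p : PairIdx, ∫ ω, (μr p.1.1 p.1.2 ω) ^ 2 ∂ℙ = 1)
    (n : ℕ) (V : PairPartition n) (eps : Fin (2 * n) → Bool)
    (heps : ∀ m : Fin n, eps (V.w m) = false ∧ eps (V.z m) = true) :
    (∀ N : ℕ,
      ∫ ω, lambdaSum n V eps (presc t fun i j => μr i j ω) N ∂(ℙ : Measure Ω)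
        = q ^ crossNum V * t ^ nestNum V * ((N : ℝ)⁻¹) ^ n * (N.choose n) * n.factorial) ∧
    Tendsto
      (fun N : ℕ => ∫ ω, lambdaSum n V eps (presc t fun i j => μr i j ω) N ∂(ℙ : Measure Ω))
      atTop (nhds (q ^ crossNum V * t ^ nestNum V)) := by
  have ht : 0 < t := lt_of_le_of_lt (abs_nonneg q) hqt
  have main : ∀ N : ℕ,
      ∫ ω, lambdaSum n V eps (presc t fun i j => μr i j ω) N ∂(ℙ : Measure Ω)
        = q ^ crossNum V * t ^ nestNum V * ((N : ℝ)⁻¹) ^ n * (N.choose n) * n.factorial := by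
    intro N
    have htup := fun (i : Fin (2 * n) → ℕ) (hi : i ∈ tuples n N V) =>
      tuple_integral q t ht μr hmeas hindep hnz hL2 hmean hsq n V eps heps N i hi
    calc ∫ ω, lambdaSum n V eps (presc t fun i j => μr i j ω) N ∂(ℙ : Measure Ω)
        = ((N : ℝ)⁻¹) ^ n * ∫ ω, ∑ i ∈ tuples n N V,
            betaProd n V eps (presc t fun a b => μr a b ω) i ∂(ℙ : Measure Ω) := by
          simp only [lambdaSum]
          rw [integral_const_mul]
      _ = ((N : ℝ)⁻¹) ^ n * ∑ i ∈ tuples n N V,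
            ∫ ω, betaProd n V eps (presc t fun a b => μr a b ω) i ∂(ℙ : Measure Ω) := by
          rw [integral_finset_sum _ (fun i hi => (htup i hi).1)]
      _ = ((N : ℝ)⁻¹) ^ n * ∑ _i ∈ tuples n N V, (q ^ crossNum V * t ^ nestNum V) := by
          rw [Finset.sum_congr rfl (fun i hi => (htup i hi).2)]
      _ = ((N : ℝ)⁻¹) ^ n * ((N.descFactorial n : ℝ) * (q ^ crossNum V * t ^ nestNum V)) := by
          rw [Finset.sum_const, card_tuples, nsmul_eq_mul]
      _ = q ^ crossNum V * t ^ nestNum V * ((N : ℝ)⁻¹) ^ n * (N.choose n) * n.factorial := by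
          rw [Nat.descFactorial_eq_factorial_mul_choose]
          push_cast
          ring
  refine ⟨main, ?_⟩
  have heq : (fun N : ℕ => ∫ ω, lambdaSum n V eps (presc t fun i j => μr i j ω) N ∂(ℙ : Measure Ω))
      = fun N : ℕ => q ^ crossNum V * t ^ nestNum V *
          (((N : ℝ)⁻¹) ^ n * (N.descFactorial n : ℝ)) := by
    funext N
    rw [main N, Nat.descFactorial_eq_factorial_mul_choose]
    push_cast
    ring
  rw [heq]
  have hlim := (tendsto_const_nhds (x := q ^ crossNum V * t ^ nestNum V)
    (f := atTop (α := ℕ))).mul (desc_tendsto n)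
  simpa using hlim
end
end

section
/- Fix t > 0 and a family of nonzero real numbers {μ(i,j)}_{i<j}, and populate coefficients μ_{ε,ε'}(i,j) for all i ≠ j, ε, ε' ∈ {1,*} by the standard prescription. Let σ_x := [[1,0],[0,√t·x]] and γ := [[0,1],[0,0]] in M₂(ℝ), and for 1 ≤ i ≤ n define b_{n,i} := σ_{μ(1,i)} ⊗ σ_{μ(2,i)} ⊗ … ⊗ σ_{μ(i−1,i)} ⊗ γ ⊗ σ₁^{⊗(n−i)} ∈ M₂(ℝ)^{⊗n} ≅ M_{2ⁿ}(ℝ), where * is the transpose and φ_n(a) := ⟨a e₀, e₀⟩ with e₀ the first standard basis vector of ℝ^{2ⁿ}. Then for every n, the elements b_{n,1}, …, b_{n,n} satisfy Condition (★) in (M_{2ⁿ}(ℝ), φ_n) with commutation coefficients {μ_{ε,ε'}(i,j)}: namely φ_n(b_{n,i}) = φ_n(b_{n,i}^*) = φ_n(b_{n,i} b_{n,i}) = φ_n(b_{n,i}^* b_{n,i}^*) = φ_n(b_{n,i}^* b_{n,i}) = 0 and φ_n(b_{n,i} b_{n,i}^*) = 1 for all i; the mixed moments of the b_{n,i} of each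 fixed length are uniformly bounded; φ_n factors over naturally ordered products in {b_{n,i}}; and b_{n,i}^ε b_{n,j}^{ε'} = μ_{ε',ε}(j,i) b_{n,j}^{ε'} b_{n,i}^ε for all i ≠ j in {1,…,n} and all ε, ε' ∈ {1,*}. -/
open Filter MeasureTheory ProbabilityTheory
open scoped BigOperators ComplexOrder Classical

noncomputable section

section JWAux

open Matrix

abbrev M2 : Type := Matrix (Fin 2) (Fin 2) ℝ

lemma star_m2 (A : M2) : star A = Aᵀ := by
  ext a b; simp [Matrix.star_apply]

lemma sel_m2 (A : M2) (e : Bool) : sel A e = if e then Aᵀ else A := by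
  cases e <;> simp [sel, star_m2]

lemma mul_apply2 (A B : M2) (a b : Fin 2) :
    (A * B) a b = A a 0 * B 0 b + A a 1 * B 1 b := by
  simp [Matrix.mul_apply, Fin.sum_univ_two]

def tens (n : ℕ) (f : Fin n → M2) : Matrix (Fin n → Fin 2) (Fin n → Fin 2) ℝ :=
  Matrix.of fun x y => ∏ k, f k (x k) (y k)

lemma tens_apply (n : ℕ) (f : Fin n → M2) (x y : Fin n → Fin 2) :
    tens n f x y = ∏ k, f k (x k) (y k) := rfl

lemma tens_mul (n : ℕ) (f g : Fin n → M2) :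
    tens n f * tens n g = tens n fun k => f k * g k := by
  ext x y
  simp only [Matrix.mul_apply, tens_apply, ← Finset.prod_mul_distrib]
  rw [Finset.prod_univ_sum, Fintype.piFinset_univ]

lemma tens_one (n : ℕ) : tens n (fun _ => (1 : M2)) = 1 := by
  ext x y
  simp only [tens_apply, Matrix.one_apply]
  rw [Finset.prod_boole]
  simp [funext_iff]

lemma star_tens (n : ℕ) (f : Fin n → M2) : star (tens n f) = tens n fun k => (f k)ᵀ := by
  ext x y
  simp [Matrix.star_apply, tens_apply, Matrix.transpose_apply]

lemma sel_tens (n : ℕ) (f : Fin n → M2) (e : Bool) :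
    sel (tens n f) e = tens n fun k => sel (f k) e := by
  cases e
  · rfl
  · show star (tens n f) = tens n fun k => sel (f k) true
    have : (fun k => sel (f k) true) = fun k => (f k)ᵀ := by
      funext k; rw [sel_m2]; simp
    rw [this, star_tens]

lemma tens_smul (n : ℕ) (c : Fin n → ℝ) (f : Fin n → M2) :
    tens n (fun k => c k • f k) = (∏ k, c k) • tens n f := by
  ext x y
  simp [tens_apply, Finset.prod_mul_distrib]

lemma listProd_tens {ι : Type*} (n : ℕ) (G : ι → Fin n → M2) (l : List ι) :
    (l.map fun x => tens n (G x)).prod = tens n fun k => (l.map fun x => G x k).prod := by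
  induction l with
  | nil => simpa using (tens_one n).symm
  | cons a l ih => simp only [List.map_cons, List.prod_cons, ih, tens_mul]

lemma phiM_tens (n : ℕ) (f : Fin n → M2) : phiM n (tens n f) = ∏ k, f k 0 0 := rfl

def jwF (t : ℝ) (m : ℕ → ℕ → ℝ) (i : ℕ) {n : ℕ} (k : Fin n) : M2 :=
  if (k : ℕ) + 1 < i then sigmaM t (m ((k : ℕ) + 1) i)
  else if (k : ℕ) + 1 = i then gammaM else sigmaM t 1

lemma jw_eq (t : ℝ) (m : ℕ → ℕ → ℝ) (n i : ℕ) :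
    jw t m n i = tens n fun k => jwF t m i k := rfl

lemma sel_jw (t : ℝ) (m : ℕ → ℕ → ℝ) (n i : ℕ) (e : Bool) :
    sel (jw t m n i) e = tens n fun k => sel (jwF t m i k) e := by
  rw [jw_eq, sel_tens]

lemma jwF_sigma (t : ℝ) (m : ℕ → ℕ → ℝ) (i : ℕ) {n : ℕ} (k : Fin n)
    (h : (k : ℕ) + 1 ≠ i) : ∃ y, jwF t m i k = sigmaM t y := by
  unfold jwF
  by_cases h1 : (k : ℕ) + 1 < i
  · rw [if_pos h1]; exact ⟨_, rfl⟩
  · rw [if_neg h1, if_neg h]; exact ⟨1, rfl⟩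

lemma sigma_transpose (t x : ℝ) : (sigmaM t x)ᵀ = sigmaM t x := by
  ext a b; fin_cases a <;> fin_cases b <;> simp [sigmaM]

lemma sel_sigma (t x : ℝ) (e : Bool) : sel (sigmaM t x) e = sigmaM t x := by
  rw [sel_m2]; cases e <;> simp [sigma_transpose]

lemma sel_gamma_false : sel gammaM false = gammaM := rfl

lemma sel_gamma_true : sel gammaM true = gammaMᵀ := by
  rw [sel_m2]; simp

lemma gamma_sigma (t x : ℝ) :
    gammaM * sigmaM t x = (Real.sqrt t * x) • (sigmaM t x * gammaM) := by
  ext a b; fin_cases a <;> fin_cases b <;>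
    simp [mul_apply2, sigmaM, gammaM, Matrix.smul_apply] <;> ring

lemma gammaT_eq : gammaMᵀ = !![0, 0; 1, 0] := by
  ext a b; fin_cases a <;> fin_cases b <;> simp [gammaM, Matrix.transpose_apply]

lemma sigma_gammaT (t x : ℝ) :
    sigmaM t x * gammaMᵀ = (Real.sqrt t * x) • (gammaMᵀ * sigmaM t x) := by
  have hT : gammaMᵀ = !![0, 0; 1, 0] := by
    ext a b; fin_cases a <;> fin_cases b <;> simp [gammaM, Matrix.transpose_apply]
  rw [hT]
  ext a b; fin_cases a <;> fin_cases b <;>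
    simp [mul_apply2, sigmaM, Matrix.smul_apply] <;> ring

lemma sigma_gamma (t x : ℝ) (h : Real.sqrt t * x ≠ 0) :
    sigmaM t x * gammaM = (Real.sqrt t * x)⁻¹ • (gammaM * sigmaM t x) := by
  rw [gamma_sigma, smul_smul, inv_mul_cancel₀ h, one_smul]

lemma gammaT_sigma (t x : ℝ) (h : Real.sqrt t * x ≠ 0) :
    gammaMᵀ * sigmaM t x = (Real.sqrt t * x)⁻¹ • (sigmaM t x * gammaMᵀ) := by
  rw [sigma_gammaT, smul_smul, inv_mul_cancel₀ h, one_smul]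

lemma sigma_comm (t x y : ℝ) : sigmaM t x * sigmaM t y = sigmaM t y * sigmaM t x := by
  ext a b; fin_cases a <;> fin_cases b <;> simp [mul_apply2, sigmaM] <;> ring

def goodM (A : M2) : Prop := A 0 0 = 1 ∧ A 0 1 = 0 ∧ A 1 0 = 0

lemma goodM_one : goodM 1 := by
  refine ⟨?_, ?_, ?_⟩ <;> simp [Matrix.one_apply]

lemma goodM_mul {A B : M2} (hA : goodM A) (hB : goodM B) : goodM (A * B) := by
  obtain ⟨a1, a2, a3⟩ := hA; obtain ⟨b1, b2, b3⟩ := hB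
  refine ⟨?_, ?_, ?_⟩ <;> simp [mul_apply2, a1, a2, a3, b1, b2, b3]

lemma goodM_transpose {A : M2} (h : goodM A) : goodM Aᵀ := by
  obtain ⟨a1, a2, a3⟩ := h
  exact ⟨a1, a3, a2⟩

lemma goodM_sel {A : M2} (h : goodM A) (e : Bool) : goodM (sel A e) := by
  rw [sel_m2]; cases e
  · simpa using h
  · simpa using goodM_transpose h

lemma goodM_sigma (t x : ℝ) : goodM (sigmaM t x) := by
  refine ⟨?_, ?_, ?_⟩ <;> simp [sigmaM]

lemma goodM_listProd {l : List M2} (h : ∀ A ∈ l, goodM A) : goodM l.prod := by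
  induction l with
  | nil => exact goodM_one
  | cons a l ih =>
    rw [List.prod_cons]
    exact goodM_mul (h a (by simp)) (ih fun A hA => h A (by simp [hA]))

lemma goodM_mul_apply {G : M2} (hG : goodM G) (A : M2) : (G * A) 0 0 = A 0 0 := by
  simp [mul_apply2, hG.1, hG.2.1]

lemma mul_goodM_apply {G : M2} (hG : goodM G) (A : M2) : (A * G) 0 0 = A 0 0 := by
  simp [mul_apply2, hG.1, hG.2.2]

lemma goodM_jwF (t : ℝ) (m : ℕ → ℕ → ℝ) (i : ℕ) {n : ℕ} (k : Fin n)
    (h : (k : ℕ) + 1 ≠ i) (e : Bool) : goodM (sel (jwF t m i k) e) := by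
  obtain ⟨y, hy⟩ := jwF_sigma t m i k h
  rw [hy]; exact goodM_sel (goodM_sigma t y) e

lemma prod_two_ifs (n i j : ℕ) (hi : 1 ≤ i) (hin : i ≤ n) (hj : 1 ≤ j) (hjn : j ≤ n)
    (hij : i ≠ j) (A B : ℝ) :
    (∏ k : Fin n, if (k : ℕ) + 1 = i then A else if (k : ℕ) + 1 = j then B else 1)
      = A * B := by
  have hsplit : ∀ k : Fin n,
      (if (k : ℕ) + 1 = i then A else if (k : ℕ) + 1 = j then B else 1)
        = (if (k : ℕ) + 1 = i then A else 1) * (if (k : ℕ) + 1 = j then B else 1) := by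
    intro k
    by_cases h : (k : ℕ) + 1 = i
    · by_cases h' : (k : ℕ) + 1 = j
      · exact absurd (h.symm.trans h') hij
      · simp [h, h', hij]
    · simp [h]
  rw [Finset.prod_congr rfl fun k _ => hsplit k, Finset.prod_mul_distrib]
  have e1 : (∏ k : Fin n, if (k : ℕ) + 1 = i then A else 1) = A := by
    rw [Finset.prod_eq_single (⟨i - 1, by omega⟩ : Fin n)]
    · have hval : ((⟨i - 1, by omega⟩ : Fin n) : ℕ) = i - 1 := rfl
      rw [if_pos (by rw [hval]; omega)]
    · intro k _ hk
      refine if_neg fun hc => hk (Fin.ext ?_)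
      show (k : ℕ) = i - 1
      omega
    · intro h; exact absurd (Finset.mem_univ _) h
  have e2 : (∏ k : Fin n, if (k : ℕ) + 1 = j then B else 1) = B := by
    rw [Finset.prod_eq_single (⟨j - 1, by omega⟩ : Fin n)]
    · have hval : ((⟨j - 1, by omega⟩ : Fin n) : ℕ) = j - 1 := rfl
      rw [if_pos (by rw [hval]; omega)]
    · intro k _ hk
      refine if_neg fun hc => hk (Fin.ext ?_)
      show (k : ℕ) = j - 1
      omega
    · intro h; exact absurd (Finset.mem_univ _) h
  rw [e1, e2]

lemma prescOne_ne_zero {t x : ℝ} (ht : 0 < t) (hx : x ≠ 0) (e e' : Bool) :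
    prescOne t x e e' ≠ 0 := by
  have htx : t * x ≠ 0 := mul_ne_zero ht.ne' hx
  cases e <;> cases e' <;> simp [prescOne, hx, htx, ht.ne']

lemma jw_comm_lt (t : ℝ) (ht : 0 < t) (m : ℕ → ℕ → ℝ) (n i j : ℕ)
    (hmij : m i j ≠ 0) (hi : 1 ≤ i) (hjn : j ≤ n) (hij : i < j) (e e' : Bool) :
    sel (jw t m n i) e * sel (jw t m n j) e' =
      (prescOne t (m i j) e e')⁻¹ • (sel (jw t m n j) e' * sel (jw t m n i) e) := by
  have hst : Real.sqrt t ≠ 0 := by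
    simpa [Real.sqrt_ne_zero'] using ht
  have hsx : Real.sqrt t * m i j ≠ 0 := mul_ne_zero hst hmij
  set A : ℝ := if e then (Real.sqrt t * m i j)⁻¹ else Real.sqrt t * m i j with hA
  set B : ℝ := if e' then Real.sqrt t else (Real.sqrt t)⁻¹ with hB
  have slot : ∀ k : Fin n,
      sel (jwF t m i k) e * sel (jwF t m j k) e' =
        (if (k : ℕ) + 1 = i then A else if (k : ℕ) + 1 = j then B else 1) •
          (sel (jwF t m j k) e' * sel (jwF t m i k) e) := by
    intro k
    by_cases hk1 : (k : ℕ) + 1 = i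
    · have hgi : jwF t m i k = gammaM := by
        unfold jwF; rw [if_neg (by omega), if_pos hk1]
      have hgj : jwF t m j (n := n) k = sigmaM t (m i j) := by
        unfold jwF; rw [if_pos (by omega), hk1]
      rw [hgi, hgj, sel_sigma, if_pos hk1]
      cases e
      · rw [sel_gamma_false]
        simpa [hA] using gamma_sigma t (m i j)
      · rw [sel_gamma_true]
        simpa [hA] using gammaT_sigma t (m i j) hsx
    · by_cases hk2 : (k : ℕ) + 1 = j
      · have hgi : jwF t m i (n := n) k = sigmaM t 1 := by
          unfold jwF; rw [if_neg (by omega), if_neg hk1]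
        have hgj : jwF t m j (n := n) k = gammaM := by
          unfold jwF; rw [if_neg (by omega), if_pos hk2]
        rw [hgi, hgj, sel_sigma, if_neg hk1, if_pos hk2]
        cases e'
        · rw [sel_gamma_false]
          simpa [hB, mul_one] using sigma_gamma t 1 (by simpa using hst)
        · rw [sel_gamma_true]
          simpa [hB, mul_one] using sigma_gammaT t 1
      · obtain ⟨y, hy⟩ := jwF_sigma t m i k hk1
        obtain ⟨y', hy'⟩ := jwF_sigma t m j k hk2
        rw [hy, hy', sel_sigma, sel_sigma, if_neg hk1, if_neg hk2, one_smul, sigma_comm]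
  have h2 : Real.sqrt t * Real.sqrt t = t := Real.mul_self_sqrt ht.le
  calc sel (jw t m n i) e * sel (jw t m n j) e'
      = tens n (fun k => sel (jwF t m i k) e) * tens n (fun k => sel (jwF t m j k) e') := by
        rw [sel_jw, sel_jw]
    _ = tens n fun k => sel (jwF t m i k) e * sel (jwF t m j k) e' := tens_mul n _ _
    _ = tens n fun k =>
          (if (k : ℕ) + 1 = i then A else if (k : ℕ) + 1 = j then B else 1) •
            (sel (jwF t m j k) e' * sel (jwF t m i k) e) := by
        exact congrArg (tens n) (funext slot)
    _ = (∏ k : Fin n, if (k : ℕ) + 1 = i then A else if (k : ℕ) + 1 = j then B else 1) •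
          tens n (fun k => sel (jwF t m j k) e' * sel (jwF t m i k) e) := tens_smul n _ _
    _ = (A * B) • (sel (jw t m n j) e' * sel (jw t m n i) e) := by
        rw [prod_two_ifs n i j hi (by omega) (by omega) hjn hij.ne A B, ← tens_mul,
          ← sel_jw, ← sel_jw]
    _ = (prescOne t (m i j) e e')⁻¹ • (sel (jw t m n j) e' * sel (jw t m n i) e) := by
        congr 1
        cases e <;> cases e'
        · show Real.sqrt t * m i j * (Real.sqrt t)⁻¹ = ((m i j)⁻¹)⁻¹
          rw [inv_inv]; field_simp
        · show Real.sqrt t * m i j * Real.sqrt t = ((t * m i j)⁻¹)⁻¹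
          rw [inv_inv]; linear_combination m i j * h2
        · show (Real.sqrt t * m i j)⁻¹ * (Real.sqrt t)⁻¹ = (t * m i j)⁻¹
          rw [← mul_inv]; congr 1; linear_combination m i j * h2
        · show (Real.sqrt t * m i j)⁻¹ * Real.sqrt t = (m i j)⁻¹
          rw [mul_inv, mul_comm (Real.sqrt t)⁻¹ (m i j)⁻¹, mul_assoc,
            inv_mul_cancel₀ hst, mul_one]

lemma prod_list_fin {ι : Type*} (n : ℕ) (g : ι → Fin n → ℝ) (L : List ι) :
    ∏ k : Fin n, (L.map fun p => g p k).prod = (L.map fun p => ∏ k, g p k).prod := by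
  induction L with
  | nil => simp
  | cons a L ih => simp [Finset.prod_mul_distrib, ih]

lemma slot_prod (t : ℝ) (m : ℕ → ℕ → ℝ) {n : ℕ} (k : Fin n) :
    ∀ L : List (ℕ × List Bool), List.Pairwise (fun p q => p.1 ≠ q.1) L →
      ((L.map fun p => ((p.2.map fun e => sel (jwF t m p.1 k) e).prod : M2)).prod) 0 0
        = (L.map fun p => ((p.2.map fun e => sel (jwF t m p.1 k) e).prod : M2) 0 0).prod := by
  intro L
  induction L with
  | nil => intro _; simp [Matrix.one_apply]
  | cons p L ih =>
    intro hL
    obtain ⟨hhead, htail⟩ := List.pairwise_cons.mp hL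
    simp only [List.map_cons, List.prod_cons]
    by_cases hp : (k : ℕ) + 1 = p.1
    · have hgood : ∀ q ∈ L, goodM (((q.2.map fun e => sel (jwF t m q.1 k) e).prod : M2)) := by
        intro q hq
        refine goodM_listProd ?_
        intro X hX
        obtain ⟨e, _, rfl⟩ := List.mem_map.mp hX
        exact goodM_jwF t m q.1 k (by have := hhead q hq; omega) e
      have hG : goodM ((L.map fun q => ((q.2.map fun e => sel (jwF t m q.1 k) e).prod : M2)).prod) := by
        refine goodM_listProd ?_
        intro X hX
        obtain ⟨q, hq, rfl⟩ := List.mem_map.mp hX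
        exact hgood q hq
      rw [mul_goodM_apply hG]
      have hone : (L.map fun q => ((q.2.map fun e => sel (jwF t m q.1 k) e).prod : M2) 0 0).prod = 1 := by
        refine List.prod_eq_one ?_
        intro x hx
        obtain ⟨q, hq, rfl⟩ := List.mem_map.mp hx
        exact (hgood q hq).1
      rw [hone, mul_one]
    · have hg : goodM (((p.2.map fun e => sel (jwF t m p.1 k) e).prod : M2)) := by
        refine goodM_listProd ?_
        intro X hX
        obtain ⟨e, _, rfl⟩ := List.mem_map.mp hX
        exact goodM_jwF t m p.1 k hp e
      rw [goodM_mul_apply hg, hg.1, one_mul, ih htail]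

lemma sigma_entry_bound {t x C : ℝ} (hC : 1 ≤ C) (h : Real.sqrt t * |x| ≤ C) :
    ∀ a b : Fin 2, |sigmaM t x a b| ≤ C := by
  intro a b
  fin_cases a <;> fin_cases b <;> simp [sigmaM] <;>
    first
    | linarith
    | (rw [abs_of_nonneg (Real.sqrt_nonneg t)]; exact h)

lemma gamma_entry_bound {C : ℝ} (hC : 1 ≤ C) : ∀ a b : Fin 2, |gammaM a b| ≤ C := by
  intro a b
  fin_cases a <;> fin_cases b <;> simp [gammaM] <;> linarith

lemma bnd_sel {C : ℝ} {A : M2} (h : ∀ a b : Fin 2, |A a b| ≤ C) (e : Bool) :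
    ∀ a b : Fin 2, |sel A e a b| ≤ C := by
  rw [sel_m2]; cases e
  · simpa using h
  · intro a b; simpa [Matrix.transpose_apply] using h b a

lemma prod_entry_bound {C : ℝ} (hC : 1 ≤ C) :
    ∀ l : List M2, (∀ A ∈ l, ∀ a b : Fin 2, |A a b| ≤ C) →
      ∀ a b : Fin 2, |l.prod a b| ≤ (2 * C) ^ l.length := by
  intro l
  induction l with
  | nil =>
    intro _ a b
    simp only [List.prod_nil, List.length_nil, pow_zero, Matrix.one_apply]
    split_ifs <;> simp
  | cons A l ih =>
    intro h a b
    have hA := h A (by simp)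
    have hl := ih fun B hB a b => h B (by simp [hB]) a b
    have h0 : (0 : ℝ) ≤ (2 * C) ^ l.length := by positivity
    have hCn : (0 : ℝ) ≤ C := by linarith
    rw [List.prod_cons, List.length_cons, pow_succ, mul_apply2]
    have b1 : |A a 0 * l.prod 0 b| ≤ C * (2 * C) ^ l.length := by
      rw [abs_mul]
      exact mul_le_mul (hA a 0) (hl 0 b) (abs_nonneg _) hCn
    have b2 : |A a 1 * l.prod 1 b| ≤ C * (2 * C) ^ l.length := by
      rw [abs_mul]
      exact mul_le_mul (hA a 1) (hl 1 b) (abs_nonneg _) hCn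
    calc |A a 0 * l.prod 0 b + A a 1 * l.prod 1 b|
        ≤ |A a 0 * l.prod 0 b| + |A a 1 * l.prod 1 b| := abs_add_le _ _
      _ ≤ C * (2 * C) ^ l.length + C * (2 * C) ^ l.length := add_le_add b1 b2
      _ = (2 * C) ^ l.length * (2 * C) := by ring

end JWAux

/-- the two-parameter Jordan–Wigner transform.  The matrices
`b_{n,1}, …, b_{n,n}` satisfy Condition (★) in `(M_{2ⁿ}(ℝ), φ_n)` with the commutation
coefficients given by the standard prescription: the listed second moments vanish,
`φ_n(b_{n,i} b_{n,i}^∗) = 1`, mixed moments of each fixed length are uniformly bounded,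
`φ_n` factors over naturally ordered products, and the commutation relation holds. -/
theorem jordan_wigner_satisfies_star_condition
    (t : ℝ) (ht : 0 < t) (m : ℕ → ℕ → ℝ) (hm : ∀ i j : ℕ, i < j → m i j ≠ 0) (n : ℕ) :
    (∀ i : ℕ, 1 ≤ i → i ≤ n →
      phiM n (jw t m n i) = 0 ∧ phiM n (star (jw t m n i)) = 0 ∧
      phiM n (jw t m n i * jw t m n i) = 0 ∧
      phiM n (star (jw t m n i) * star (jw t m n i)) = 0 ∧
      phiM n (star (jw t m n i) * jw t m n i) = 0 ∧
      phiM n (jw t m n i * star (jw t m n i)) = 1) ∧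
    (∀ r : ℕ, ∃ α : ℝ, 0 ≤ α ∧ ∀ l : List (ℕ × Bool), l.length = r →
      (∀ p ∈ l, 1 ≤ p.1 ∧ p.1 ≤ n) →
      |phiM n ((l.map fun p => sel (jw t m n p.1) p.2).prod)| ≤ α) ∧
    (∀ L : List (ℕ × List Bool),
      List.Chain' (· < ·) (L.map Prod.fst) →
      (∀ p ∈ L, (1 ≤ p.1 ∧ p.1 ≤ n) ∧ p.2 ≠ []) →
      phiM n ((L.map fun p => (p.2.map (sel (jw t m n p.1))).prod).prod)
        = (L.map fun p => phiM n ((p.2.map (sel (jw t m n p.1))).prod)).prod) ∧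
    (∀ i j : ℕ, 1 ≤ i → i ≤ n → 1 ≤ j → j ≤ n → i ≠ j → ∀ e e' : Bool,
      sel (jw t m n i) e * sel (jw t m n j) e'
        = presc t m e' e j i • (sel (jw t m n j) e' * sel (jw t m n i) e)) := by
  refine ⟨?_, ?_, ?_, ?_⟩
  · -- Part 1: second moments
    intro i hi hin
    have hki : ((⟨i - 1, by omega⟩ : Fin n) : ℕ) + 1 = i := by
      show i - 1 + 1 = i; omega
    have hgam : jwF t m i (⟨i - 1, by omega⟩ : Fin n) = gammaM := by
      unfold jwF; rw [if_neg (by omega), if_pos hki]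
    refine ⟨?_, ?_, ?_, ?_, ?_, ?_⟩
    · rw [jw_eq, phiM_tens]
      refine Finset.prod_eq_zero (Finset.mem_univ (⟨i - 1, by omega⟩ : Fin n)) ?_
      rw [hgam]; simp [gammaM]
    · rw [jw_eq, star_tens, phiM_tens]
      refine Finset.prod_eq_zero (Finset.mem_univ (⟨i - 1, by omega⟩ : Fin n)) ?_
      rw [hgam]; simp [gammaM, Matrix.transpose_apply]
    · rw [jw_eq, tens_mul, phiM_tens]
      refine Finset.prod_eq_zero (Finset.mem_univ (⟨i - 1, by omega⟩ : Fin n)) ?_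
      rw [hgam]; simp [gammaM, mul_apply2]
    · rw [jw_eq, star_tens, tens_mul, phiM_tens]
      refine Finset.prod_eq_zero (Finset.mem_univ (⟨i - 1, by omega⟩ : Fin n)) ?_
      rw [hgam, gammaT_eq]; simp [mul_apply2]
    · rw [jw_eq, star_tens, tens_mul, phiM_tens]
      refine Finset.prod_eq_zero (Finset.mem_univ (⟨i - 1, by omega⟩ : Fin n)) ?_
      rw [hgam, gammaT_eq]; simp [gammaM, mul_apply2]
    · rw [jw_eq, star_tens, tens_mul, phiM_tens]
      refine Finset.prod_eq_one ?_
      intro k _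
      by_cases hk : (k : ℕ) + 1 = i
      · have hg : jwF t m i k = gammaM := by
          unfold jwF; rw [if_neg (by omega), if_pos hk]
        rw [hg]; simp [gammaM, mul_apply2, Matrix.transpose_apply]
      · obtain ⟨y, hy⟩ := jwF_sigma t m i k hk
        rw [hy, sigma_transpose]; simp [sigmaM, mul_apply2]
  · -- Part 2: boundedness
    intro r
    set S : ℝ := ∑ a ∈ Finset.Icc 1 n, ∑ b ∈ Finset.Icc 1 n, |m a b| with hS
    have hS0 : 0 ≤ S := Finset.sum_nonneg fun _ _ => Finset.sum_nonneg fun _ _ => abs_nonneg _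
    set C : ℝ := 1 + Real.sqrt t * (1 + S) with hCdef
    have hsqrt : 0 ≤ Real.sqrt t := Real.sqrt_nonneg t
    have hC : 1 ≤ C := by nlinarith
    refine ⟨((2 * C) ^ r) ^ n, by positivity, ?_⟩
    intro l hlen hmem
    have hconv : (l.map fun p => sel (jw t m n p.1) p.2)
        = l.map fun p => tens n fun k => sel (jwF t m p.1 k) p.2 := by
      refine List.map_congr_left ?_
      intro p _
      exact sel_jw t m n p.1 p.2
    rw [hconv, listProd_tens, phiM_tens, Finset.abs_prod]
    have hbound : ∀ k : Fin n,
        |(l.map fun p => sel (jwF t m p.1 k) p.2).prod 0 0| ≤ (2 * C) ^ r := by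
      intro k
      have hb : ∀ A ∈ l.map fun p => sel (jwF t m p.1 k) p.2,
          ∀ a b : Fin 2, |A a b| ≤ C := by
        intro A hA
        obtain ⟨p, hp, rfl⟩ := List.mem_map.mp hA
        obtain ⟨hp1, hp2⟩ := hmem p hp
        refine bnd_sel ?_ p.2
        unfold jwF
        split_ifs with h1 h2
        · refine sigma_entry_bound hC ?_
          have hmem1 : (k : ℕ) + 1 ∈ Finset.Icc 1 n := by
            simp only [Finset.mem_Icc]; omega
          have hmem2 : p.1 ∈ Finset.Icc 1 n := by
            simp only [Finset.mem_Icc]; exact ⟨hp1, hp2⟩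
          have hb1 : |m ((k : ℕ) + 1) p.1| ≤ ∑ b ∈ Finset.Icc 1 n, |m ((k : ℕ) + 1) b| :=
            Finset.single_le_sum (f := fun b => |m ((k : ℕ) + 1) b|)
              (fun _ _ => abs_nonneg _) hmem2
          have hb2 : (∑ b ∈ Finset.Icc 1 n, |m ((k : ℕ) + 1) b|) ≤ S :=
            Finset.single_le_sum
              (f := fun a => ∑ b ∈ Finset.Icc 1 n, |m a b|)
              (fun _ _ => Finset.sum_nonneg fun _ _ => abs_nonneg _) hmem1
          have : Real.sqrt t * |m ((k : ℕ) + 1) p.1| ≤ Real.sqrt t * (1 + S) := by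
            apply mul_le_mul_of_nonneg_left _ hsqrt
            linarith
          linarith
        · exact gamma_entry_bound hC
        · refine sigma_entry_bound hC ?_
          have : Real.sqrt t * |(1 : ℝ)| = Real.sqrt t := by simp
          rw [this]
          nlinarith
      have := prod_entry_bound hC (l.map fun p => sel (jwF t m p.1 k) p.2) hb 0 0
      rwa [List.length_map, hlen] at this
    calc (∏ k : Fin n, |(l.map fun p => sel (jwF t m p.1 k) p.2).prod 0 0|)
        ≤ ∏ _k : Fin n, (2 * C) ^ r :=
          Finset.prod_le_prod (fun _ _ => abs_nonneg _) fun k _ => hbound k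
      _ = ((2 * C) ^ r) ^ n := by
          rw [Finset.prod_const, Finset.card_univ, Fintype.card_fin]
  · -- Part 3: factoring over naturally ordered products
    intro L hchain hmem
    have hpw : List.Pairwise (fun p q : ℕ × List Bool => p.1 ≠ q.1) L := by
      have h1 := List.isChain_iff_pairwise.mp hchain
      rw [List.pairwise_map] at h1
      exact h1.imp fun h => Nat.ne_of_lt h
    have hblock : ∀ p : ℕ × List Bool,
        ((p.2.map (sel (jw t m n p.1))).prod : Matrix (Fin n → Fin 2) (Fin n → Fin 2) ℝ)
          = tens n fun k => (p.2.map fun e => sel (jwF t m p.1 k) e).prod := by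
      intro p
      have : p.2.map (sel (jw t m n p.1))
          = p.2.map fun e => tens n fun k => sel (jwF t m p.1 k) e := by
        refine List.map_congr_left fun e _ => sel_jw t m n p.1 e
      rw [this, listProd_tens]
    have hL1 : (L.map fun p => ((p.2.map (sel (jw t m n p.1))).prod
          : Matrix (Fin n → Fin 2) (Fin n → Fin 2) ℝ))
        = L.map fun p => tens n fun k => (p.2.map fun e => sel (jwF t m p.1 k) e).prod := by
      refine List.map_congr_left fun p _ => hblock p
    rw [hL1, listProd_tens, phiM_tens]
    have hL2 : (L.map fun p => phiM n ((p.2.map (sel (jw t m n p.1))).prod))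
        = L.map fun p => ∏ k : Fin n, ((p.2.map fun e => sel (jwF t m p.1 k) e).prod : M2) 0 0 := by
      refine List.map_congr_left fun p _ => ?_
      rw [hblock p, phiM_tens]
    rw [hL2, ← prod_list_fin]
    refine Finset.prod_congr rfl fun k _ => ?_
    exact slot_prod t m k L hpw
  · -- Part 4: commutation relation
    intro i j hi hin hj hjn hij e e'
    rcases lt_or_gt_of_ne hij with h | h
    · have key := jw_comm_lt t ht m n i j (hm i j h) hi hjn h e e'
      rw [key]
      congr 1
      unfold presc
      rw [if_neg (by omega)]
    · have key := jw_comm_lt t ht m n j i (hm j i h) hj hin h e' e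
      have hne : prescOne t (m j i) e' e ≠ 0 := prescOne_ne_zero ht (hm j i h) e' e
      have hpr : presc t m e' e j i = prescOne t (m j i) e' e := by
        unfold presc; rw [if_pos h]
      rw [hpr, key, smul_smul, mul_inv_cancel₀ hne, one_smul]
end
end

section
/- Let (𝒜, φ) be a non-commutative probability space and let {b_i}_{i∈ℕ} satisfy Condition (★) with real nonzero commutation coefficients. Let r ∈ ℕ, ε(1),…,ε(r) ∈ {1,*}, and let V be a set partition of {1,…,r} containing a singleton block. Then for every tuple (i(1),…,i(r)) ∈ ℕ^r with (i(1),…,i(r)) ~ V, one has φ(b_{i(1)}^{ε(1)} ⋯ b_{i(r)}^{ε(r)}) = 0. -/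
open Filter MeasureTheory ProbabilityTheory
open scoped BigOperators ComplexOrder Classical

noncomputable section

namespace Aux13

def grp : List (ℕ × Bool) → List (ℕ × List Bool)
  | [] => []
  | (i, e) :: t =>
      (i, e :: (t.takeWhile (fun q => q.1 = i)).map Prod.snd) ::
        grp (t.dropWhile (fun q => q.1 = i))
termination_by l => l.length
decreasing_by
  simp only [List.length_cons]
  exact Nat.lt_succ_of_le ((List.dropWhile_sublist _).length_le)

lemma grp_ne_nil : ∀ l, ∀ p ∈ grp l, p.2 ≠ [] := by
  intro l
  induction l using grp.induct with
  | case1 => intro p hp; simp [grp] at hp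
  | case2 i e t ih =>
    intro p hp
    rw [grp] at hp
    rcases List.mem_cons.1 hp with h | h
    · subst h; simp
    · exact ih p h

lemma grp_prod {A : Type*} [Monoid A] [Star A] (b : ℕ → A) :
    ∀ l, ((grp l).map fun p => (p.2.map (sel (b p.1))).prod).prod = listProd b l := by
  intro l
  induction l using grp.induct with
  | case1 => simp [grp, listProd]
  | case2 i e t ih =>
    rw [grp]
    set s := t.takeWhile (fun q => q.1 = i) with hs
    set rest := t.dropWhile (fun q => q.1 = i) with hrest
    have ht : s ++ rest = t := List.takeWhile_append_dropWhile
    have hsmem : ∀ q ∈ s, q.1 = i := by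
      intro q hq
      have := List.mem_takeWhile_imp (hs ▸ hq)
      simpa using this
    have hmap : List.map (fun p : ℕ × Bool => sel (b p.1) p.2) s
        = List.map (sel (b i)) (s.map Prod.snd) := by
      rw [List.map_map]
      exact List.map_congr_left fun q hq => by simp [Function.comp, hsmem q hq]
    conv_rhs => rw [show ((i, e) :: t : List (ℕ × Bool)) = (i, e) :: (s ++ rest) from by rw [ht]]
    simp only [List.map_cons, List.prod_cons, ih, listProd, List.map_append,
      List.prod_append, hmap, mul_assoc]

lemma grp_head : ∀ l : List (ℕ × Bool), (grp l).head?.map Prod.fst = l.head?.map Prod.fst := by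
  intro l
  match l with
  | [] => simp [grp]
  | (i, e) :: t => rw [grp]; simp

lemma grp_chain : ∀ l : List (ℕ × Bool), l.Pairwise (fun p q => p.1 ≤ q.1) →
    List.Chain' (· < ·) ((grp l).map Prod.fst) := by
  intro l
  induction l using grp.induct with
  | case1 => intro _; simp [grp, List.Chain']
  | case2 i e t ih =>
    intro hsort
    rw [grp]
    set rest := t.dropWhile (fun q => q.1 = i) with hrest
    have hrs : rest.Sublist t := List.dropWhile_sublist _
    have hsort' : List.Pairwise (fun p q : ℕ × Bool => p.1 ≤ q.1) rest :=
      (List.pairwise_cons.1 hsort).2.sublist hrs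
    rw [List.map_cons, List.Chain', List.isChain_cons]
    refine ⟨?_, ih hsort'⟩
    intro y hy
    show i < y
    have hh : ((grp rest).map Prod.fst).head? = rest.head?.map Prod.fst := by
      rw [List.head?_map, grp_head, ← Option.map_eq_map]
    rw [hh] at hy
    cases hq : rest.head? with
    | none => rw [hq] at hy; simp at hy
    | some q =>
      rw [hq] at hy
      simp only [Option.map_some, Option.mem_def, Option.some.injEq] at hy
      subst hy
      have hqmem : q ∈ rest := List.mem_of_mem_head? (by rw [hq]; rfl)
      have hq1 : decide (q.1 = i) = false := by
        have := List.head?_dropWhile_not (fun q : ℕ × Bool => decide (q.1 = i)) t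
        rw [← hrest, hq] at this
        exact this
      have hq1' : q.1 ≠ i := by simpa using hq1
      have hle : i ≤ q.1 := (List.pairwise_cons.1 hsort).1 q (hrs.mem hqmem)
      exact lt_of_le_of_ne hle (Ne.symm hq1')

lemma grp_singleton : ∀ l : List (ℕ × Bool), ∀ m : ℕ,
    l.countP (fun p => p.1 = m) = 1 → ∃ e, (m, [e]) ∈ grp l := by
  intro l
  induction l using grp.induct with
  | case1 => intro m h; simp at h
  | case2 i e t ih =>
    intro m h
    rw [List.countP_cons] at h
    by_cases him : i = m
    · subst him
      simp only [decide_true, if_true] at h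
      have hc0 : List.countP (fun p : ℕ × Bool => decide (p.1 = i)) t = 0 := by omega
      have ht0 : t.countP (fun p => decide (p.1 = i)) = 0 := by
        have h' := h
        omega
      have hnone : ∀ q ∈ t, ¬ (q.1 = i) := by
        intro q hq
        have := List.countP_eq_zero.1 ht0 q hq
        simpa using this
      have htake : t.takeWhile (fun q => q.1 = i) = [] := by
        cases ht : t with
        | nil => simp
        | cons q r =>
          rw [List.takeWhile]
          have : ¬ (q.1 = i) := hnone q (ht ▸ List.mem_cons_self)
          simp [this]
      rw [grp, htake]
      exact ⟨e, by simp⟩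
    · simp only [decide_eq_true_eq] at h
      rw [if_neg him] at h
      set s := t.takeWhile (fun q => q.1 = i) with hs
      set rest := t.dropWhile (fun q => q.1 = i) with hrest
      have ht : s ++ rest = t := List.takeWhile_append_dropWhile
      have hscount : s.countP (fun p => p.1 = m) = 0 := by
        rw [List.countP_eq_zero]
        intro q hq
        have h1' := List.mem_takeWhile_imp (hs ▸ hq)
        have h1 : q.1 = i := by simpa using h1'
        simp [h1, him]
      have hrcount : rest.countP (fun p => p.1 = m) = 1 := by
        have happ := List.countP_append (p := fun p : ℕ × Bool => decide (p.1 = m)) (l₁ := s) (l₂ := rest)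
        rw [ht] at happ
        omega
      obtain ⟨e', he'⟩ := ih m hrcount
      exact ⟨e', by rw [grp]; exact List.mem_cons_of_mem _ he'⟩

end Aux13

namespace Aux13

instance : IsTotal (ℕ × Bool) (fun p q => p.1 ≤ q.1) := ⟨fun a b => Nat.le_total a.1 b.1⟩
instance : IsTrans (ℕ × Bool) (fun p q => p.1 ≤ q.1) := ⟨fun _ _ _ h h' => le_trans h h'⟩

lemma insert_scalar {A : Type*} [Ring A] [StarRing A] [Algebra ℂ A]
    (b : ℕ → A) (c : Bool → Bool → ℕ → ℕ → ℝ)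
    (hcomm : ∀ i j : ℕ, i ≠ j → ∀ e e' : Bool,
      sel (b i) e * sel (b j) e' = ((c e' e j i : ℝ) : ℂ) • (sel (b j) e' * sel (b i) e)) :
    ∀ (l : List (ℕ × Bool)) (p : ℕ × Bool),
      ∃ s : ℝ, sel (b p.1) p.2 * listProd b l
        = ((s : ℝ) : ℂ) • listProd b (l.orderedInsert (fun p q => p.1 ≤ q.1) p) := by
  intro l
  induction l with
  | nil => intro p; exact ⟨1, by simp [listProd, List.orderedInsert]⟩
  | cons q t ih =>
    intro p
    rw [List.orderedInsert]
    by_cases hle : p.1 ≤ q.1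
    · refine ⟨1, ?_⟩
      rw [if_pos hle]
      simp [listProd]
    · obtain ⟨s, hs⟩ := ih p
      have hne : p.1 ≠ q.1 := fun h => hle (le_of_eq h)
      refine ⟨c q.2 p.2 q.1 p.1 * s, ?_⟩
      rw [if_neg hle]
      have h1 : listProd b (q :: t) = sel (b q.1) q.2 * listProd b t := by
        simp [listProd]
      have h2 : listProd b (q :: t.orderedInsert (fun p q => p.1 ≤ q.1) p)
          = sel (b q.1) q.2 * listProd b (t.orderedInsert (fun p q => p.1 ≤ q.1) p) := by
        simp [listProd]
      rw [h1, h2, ← mul_assoc, hcomm p.1 q.1 hne p.2 q.2, smul_mul_assoc, mul_assoc, hs,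
        mul_smul_comm, smul_smul, Complex.ofReal_mul]

lemma sort_scalar {A : Type*} [Ring A] [StarRing A] [Algebra ℂ A]
    (b : ℕ → A) (c : Bool → Bool → ℕ → ℕ → ℝ)
    (hcomm : ∀ i j : ℕ, i ≠ j → ∀ e e' : Bool,
      sel (b i) e * sel (b j) e' = ((c e' e j i : ℝ) : ℂ) • (sel (b j) e' * sel (b i) e)) :
    ∀ l : List (ℕ × Bool),
      ∃ s : ℝ, listProd b l
        = ((s : ℝ) : ℂ) • listProd b (l.insertionSort (fun p q => p.1 ≤ q.1)) := by
  intro l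
  induction l with
  | nil => exact ⟨1, by simp⟩
  | cons p t ih =>
    obtain ⟨s₁, hs₁⟩ := ih
    obtain ⟨s₂, hs₂⟩ := insert_scalar b c hcomm (t.insertionSort (fun p q => p.1 ≤ q.1)) p
    refine ⟨s₁ * s₂, ?_⟩
    rw [List.insertionSort_cons]
    have h1 : listProd b (p :: t) = sel (b p.1) p.2 * listProd b t := by simp [listProd]
    rw [h1, hs₁, mul_smul_comm, hs₂, smul_smul, Complex.ofReal_mul]

end Aux13

/-- if the set partition `P` of `{1,…,r}` contains a singleton block, then
`φ(b_{i(1)}^{ε(1)} ⋯ b_{i(r)}^{ε(r)}) = 0` for every tuple `i ∼ P`. -/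
theorem moment_vanishes_of_singleton_block {A : Type*} [Ring A] [StarRing A] [Algebra ℂ A]
    [StarModule ℂ A]
    (φ : A →ₗ[ℂ] ℂ) (hφ1 : φ 1 = 1) (hpos : ∀ a : A, 0 ≤ φ (a * star a))
    (b : ℕ → A) (c : Bool → Bool → ℕ → ℕ → ℝ)
    (hnz : NonzeroCoeff c) (hcond : StarCond φ b c)
    (r : ℕ) (eps : Fin r → Bool)
    (P : Finpartition (Finset.univ : Finset (Fin r)))
    (k : Fin r) (hk : {k} ∈ P.parts)
    (i : Fin r → ℕ)
    (hi : ∀ k₁ k₂ : Fin r, i k₁ = i k₂ ↔ ∃ B ∈ P.parts, k₁ ∈ B ∧ k₂ ∈ B) :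
    φ (tupProd b i eps) = 0 := by
  classical
  set m := i k with hm
  set l₀ : List (ℕ × Bool) := List.ofFn (fun j => (i j, eps j)) with hl₀
  set l₁ := l₀.insertionSort (fun p q => p.1 ≤ q.1) with hl₁
  have htup : tupProd b i eps = listProd b l₀ := by
    simp only [tupProd, listProd, hl₀, List.map_ofFn]
    rfl
  obtain ⟨s, hsort⟩ := Aux13.sort_scalar b c hcond.commRel l₀
  have hiff : ∀ j : Fin r, i j = m ↔ j = k := by
    intro j
    constructor
    · intro h
      obtain ⟨B, hB, hjB, hkB⟩ := (hi j k).1 h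
      have hBk : B = {k} := P.eq_of_mem_parts hB hk hkB (Finset.mem_singleton_self k)
      rw [hBk] at hjB
      exact Finset.mem_singleton.1 hjB
    · rintro rfl; rfl
  have hcount₀ : l₀.countP (fun p => p.1 = m) = 1 := by
    rw [hl₀, List.ofFn_eq_map, List.countP_map]
    have hcg : ((List.finRange r).countP fun j => decide (i j = m))
        = (List.finRange r).countP fun j => j == k := by
      refine List.countP_congr fun j _ => ?_
      simp [hiff j]
    have hcomp : ((fun p : ℕ × Bool => decide (p.1 = m)) ∘ fun j : Fin r => (i j, eps j))
        = fun j => decide (i j = m) := rfl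
    rw [hcomp, hcg]
    exact List.count_eq_one_of_mem (List.nodup_finRange r) (List.mem_finRange k)
  have hcount₁ : l₁.countP (fun p => p.1 = m) = 1 := by
    rw [(List.perm_insertionSort (fun p q : ℕ × Bool => p.1 ≤ q.1) l₀).countP_eq]
    exact hcount₀
  have hsorted : l₁.Pairwise (fun p q : ℕ × Bool => p.1 ≤ q.1) :=
    List.pairwise_insertionSort _ l₀
  obtain ⟨e', he'⟩ := Aux13.grp_singleton l₁ m hcount₁
  have hfac := hcond.factors (Aux13.grp l₁) (Aux13.grp_chain l₁ hsorted) (Aux13.grp_ne_nil l₁)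
  rw [Aux13.grp_prod b l₁] at hfac
  have hzero : φ (listProd b l₁) = 0 := by
    rw [hfac]
    refine List.prod_eq_zero ?_
    refine List.mem_map.2 ⟨(m, [e']), he', ?_⟩
    simp only [List.map_cons, List.map_nil, List.prod_cons, List.prod_nil, mul_one]
    cases e' with
    | false => simpa [sel] using hcond.zero_mean m
    | true => simpa [sel] using hcond.zero_mean_star m
  rw [htup, hsort, LinearMap.map_smul, ← hl₁, hzero, smul_zero]
end
end
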